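/- Let n, d be positive integers with d ≤ n. Then for every integer w with 1 ≤ w ≤ n, C(n−d, w−1) / C(n, w) ≤ C(n−d, ⌊n/d⌋−1) / C(n, ⌊n/d⌋); that is, the function f(w) = C(n−d, w−1)/C(n, w) attains its maximum over w ∈ {1, …, n} at w = ⌊n/d⌋. -/

import Mathlib

lemma up_nat (n d w : ℕ) (hw : 1 ≤ w) (hd : 1 ≤ d) (h : (w + 1) * d ≤ n + 1) :
    (n - d).choose (w - 1) * n.choose (w + 1) ≤ (n - d).choose w * n.choose w := by
  have hwle : w + d ≤ n + 1 := by
    have h0 : w ≤ w * d := Nat.le_mul_of_pos_right w hd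
    nlinarith
  have hdn : d ≤ n := by omega
  have h1 : n.choose (w + 1) * (w + 1) = n.choose w * (n - w) := Nat.choose_succ_right_eq n w
  have h2 : (n - d).choose w * w = (n - d).choose (w - 1) * (n - d - (w - 1)) := by
    have hww : w - 1 + 1 = w := by omega
    conv_lhs => rw [← hww]
    exact Nat.choose_succ_right_eq (n - d) (w - 1)
  have key : (n - w) * w ≤ (n - d - (w - 1)) * (w + 1) := by
    zify [show w ≤ n by omega, show w - 1 ≤ n - d by omega, hdn, hw]
    nlinarith
  have main : ((n - d).choose (w - 1) * n.choose (w + 1)) * ((w + 1) * w)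
      ≤ ((n - d).choose w * n.choose w) * ((w + 1) * w) := by
    calc ((n - d).choose (w - 1) * n.choose (w + 1)) * ((w + 1) * w)
        = (n - d).choose (w - 1) * (n.choose (w + 1) * (w + 1)) * w := by ring
      _ = (n - d).choose (w - 1) * (n.choose w * (n - w)) * w := by rw [h1]
      _ = ((n - d).choose (w - 1) * n.choose w) * ((n - w) * w) := by ring
      _ ≤ ((n - d).choose (w - 1) * n.choose w) * ((n - d - (w - 1)) * (w + 1)) :=
          Nat.mul_le_mul_left _ key
      _ = ((n - d).choose (w - 1) * (n - d - (w - 1))) * n.choose w * (w + 1) := by ring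
      _ = ((n - d).choose w * w) * n.choose w * (w + 1) := by rw [← h2]
      _ = ((n - d).choose w * n.choose w) * ((w + 1) * w) := by ring
  exact Nat.le_of_mul_le_mul_right main (by positivity)

lemma down_nat (n d w : ℕ) (hw : 1 ≤ w) (hd : 1 ≤ d) (hdn : d ≤ n) (hwn : w ≤ n)
    (h : n + 1 ≤ (w + 1) * d) :
    (n - d).choose w * n.choose w ≤ (n - d).choose (w - 1) * n.choose (w + 1) := by
  by_cases hcase : n - d < w
  · rw [Nat.choose_eq_zero_of_lt hcase]
    simp
  · push_neg at hcase
    have h1 : n.choose (w + 1) * (w + 1) = n.choose w * (n - w) := Nat.choose_succ_right_eq n w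
    have h2 : (n - d).choose w * w = (n - d).choose (w - 1) * (n - d - (w - 1)) := by
      have hww : w - 1 + 1 = w := by omega
      conv_lhs => rw [← hww]
      exact Nat.choose_succ_right_eq (n - d) (w - 1)
    have key : (n - d - (w - 1)) * (w + 1) ≤ (n - w) * w := by
      zify [hwn, show w - 1 ≤ n - d by omega, hdn, hw]
      nlinarith
    have main : ((n - d).choose w * n.choose w) * ((w + 1) * w)
        ≤ ((n - d).choose (w - 1) * n.choose (w + 1)) * ((w + 1) * w) := by
      calc ((n - d).choose w * n.choose w) * ((w + 1) * w)
          = ((n - d).choose w * w) * n.choose w * (w + 1) := by ring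
        _ = ((n - d).choose (w - 1) * (n - d - (w - 1))) * n.choose w * (w + 1) := by rw [h2]
        _ = ((n - d).choose (w - 1) * n.choose w) * ((n - d - (w - 1)) * (w + 1)) := by ring
        _ ≤ ((n - d).choose (w - 1) * n.choose w) * ((n - w) * w) :=
            Nat.mul_le_mul_left _ key
        _ = (n - d).choose (w - 1) * (n.choose w * (n - w)) * w := by ring
        _ = (n - d).choose (w - 1) * (n.choose (w + 1) * (w + 1)) * w := by rw [← h1]
        _ = ((n - d).choose (w - 1) * n.choose (w + 1)) * ((w + 1) * w) := by ring
    exact Nat.le_of_mul_le_mul_right main (by positivity)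

lemma up_real (n d w : ℕ) (hw : 1 ≤ w) (hd : 1 ≤ d) (hwn : w + 1 ≤ n)
    (h : (w + 1) * d ≤ n + 1) :
    ((n - d).choose (w - 1) : ℝ) / (n.choose w)
      ≤ ((n - d).choose w : ℝ) / (n.choose (w + 1)) := by
  have p1 : (0 : ℝ) < n.choose w := by exact_mod_cast Nat.choose_pos (by omega)
  have p2 : (0 : ℝ) < n.choose (w + 1) := by exact_mod_cast Nat.choose_pos hwn
  rw [div_le_div_iff₀ p1 p2]
  exact_mod_cast up_nat n d w hw hd h

lemma down_real (n d w : ℕ) (hw : 1 ≤ w) (hd : 1 ≤ d) (hdn : d ≤ n) (hwn : w + 1 ≤ n)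
    (h : n + 1 ≤ (w + 1) * d) :
    ((n - d).choose w : ℝ) / (n.choose (w + 1))
      ≤ ((n - d).choose (w - 1) : ℝ) / (n.choose w) := by
  have p1 : (0 : ℝ) < n.choose w := by exact_mod_cast Nat.choose_pos (by omega)
  have p2 : (0 : ℝ) < n.choose (w + 1) := by exact_mod_cast Nat.choose_pos hwn
  rw [div_le_div_iff₀ p2 p1]
  exact_mod_cast down_nat n d w hw hd hdn (by omega) h

lemma asc (n d : ℕ) (hd : 1 ≤ d) (hdn : d ≤ n) :
    ∀ k w, 1 ≤ w → w + k = n / d →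
      ((n - d).choose (w - 1) : ℝ) / (n.choose w)
        ≤ ((n - d).choose (n / d - 1) : ℝ) / (n.choose (n / d))
  | 0, w, hw, hk => by
      simp only [Nat.add_zero] at hk
      rw [hk]
  | (k + 1), w, hw, hk => by
      have hmn : n / d ≤ n := Nat.div_le_self n d
      have hwn : w + 1 ≤ n := by omega
      have hcond : (w + 1) * d ≤ n + 1 := by
        have h1 : (w + 1) * d ≤ (n / d) * d := Nat.mul_le_mul_right d (by omega)
        have h2 : (n / d) * d ≤ n := Nat.div_mul_le_self n d
        omega
      exact (up_real n d w hw hd hwn hcond).trans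
        (asc n d hd hdn k (w + 1) (by omega) (by omega))

lemma desc (n d : ℕ) (hd : 1 ≤ d) (hdn : d ≤ n) :
    ∀ k w, w = n / d + k → w ≤ n →
      ((n - d).choose (w - 1) : ℝ) / (n.choose w)
        ≤ ((n - d).choose (n / d - 1) : ℝ) / (n.choose (n / d))
  | 0, w, hk, hwn => by
      simp only [Nat.add_zero] at hk
      rw [hk]
  | (k + 1), w, hk, hwn => by
      have hm1 : 1 ≤ n / d := (Nat.one_le_div_iff hd).mpr hdn
      have hcond : n + 1 ≤ (n / d + k + 1) * d := by
        have h1 : n < (n / d + 1) * d := (Nat.div_lt_iff_lt_mul hd).mp (by omega)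
        have h2 : (n / d + 1) * d ≤ (n / d + k + 1) * d := Nat.mul_le_mul_right d (by omega)
        omega
      have step := down_real n d (n / d + k) (by omega) hd hdn (by omega) hcond
      have hrec := desc n d hd hdn k (n / d + k) rfl (by omega)
      rw [hk, show n / d + (k + 1) - 1 = n / d + k from by omega,
        show n / d + (k + 1) = n / d + k + 1 from by omega]
      rw [show n / d + k - 1 = n / d + k - 1 from rfl] at step
      exact step.trans hrec

theorem ratio_max_at_floor (n d : ℕ) (hn : 0 < n) (hd : 0 < d) (hdn : d ≤ n) :
    ∀ w : ℕ, 1 ≤ w → w ≤ n →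
      ((n - d).choose (w - 1) : ℝ) / (n.choose w)
        ≤ ((n - d).choose (n / d - 1) : ℝ) / (n.choose (n / d)) := by
  intro w h1 h2
  rcases le_or_gt w (n / d) with h | h
  · exact asc n d hd hdn (n / d - w) w h1 (by omega)
  · exact desc n d hd hdn (w - n / d) w (by omega) h2
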